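/- (Dong Lemma) Let A be a Lie algebra over a field of characteristic zero, and let a(z), b(z), c(z) be formal distributions over A that are pairwise mutually local. Then for every n ∈ ℤ₊, the pairs ((a₍ₙ₎b)(z), c(z)) and (a(z), (b₍ₙ₎c)(z)) are local, where (a₍ₙ₎b)(z) is the n-th product with coefficients (a₍ₙ₎b)ₘ = Σ_{s≥0} (−1)^s C(n,s) a_{n−s} b_{m+s}. -/
import Mathlib


variable {k L : Type*} [Field k] [CharZero k] [LieRing L] [LieAlgebra k L]

/-- `Σ_{s=0}^{N} (−1)^s C(N,s) ⁅a_{n−s}, b_{m+s}⁆`, the coefficient expression whose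
vanishing for all `n, m` expresses locality of `(a(z), b(z))` at level `N`. -/
def locSum (a b : ℤ → L) (N : ℕ) (n m : ℤ) : L :=
  ∑ s ∈ Finset.range (N + 1),
    ((-1) ^ s * (N.choose s) : ℤ) • ⁅a (n - (s : ℤ)), b (m + (s : ℤ))⁆

/-- The pair of formal distributions `(a(z), b(z))` over the Lie algebra `L` is local. -/
def IsLocalPair (a b : ℤ → L) : Prop :=
  ∃ N : ℕ, ∀ n m : ℤ, locSum a b N n m = 0

/-- The `n`-th product `(a₍ₙ₎b)(z)`: `(a₍ₙ₎b)ₘ = Σ_{s≥0} (−1)^s C(n,s) ⁅a_{n−s}, b_{m+s}⁆`. -/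
def nProd (a b : ℤ → L) (n : ℕ) : ℤ → L := fun m => locSum a b n (n : ℤ) m

namespace DongAux

abbrev V (L : Type*) [LieRing L] := (ℤ × ℤ × ℤ) → L

def E (v : ℤ × ℤ × ℤ) : Module.End ℤ (V L) where
  toFun F := fun p => F (p + v)
  map_add' _ _ := rfl
  map_smul' _ _ := rfl

@[simp] lemma E_apply (v : ℤ × ℤ × ℤ) (F : V L) (p) :
    (E v : Module.End ℤ (V L)) F p = F (p + v) := rfl

lemma E_mul (v w : ℤ × ℤ × ℤ) : (E v : Module.End ℤ (V L)) * E w = E (v + w) := by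
  ext F p
  simp [E, Module.End.mul_apply, add_assoc]

lemma E_pow (v : ℤ × ℤ × ℤ) (s : ℕ) : (E v : Module.End ℤ (V L)) ^ s = E (s • v) := by
  induction s with
  | zero => ext F p; simp [E]
  | succ n ih => rw [pow_succ, ih, E_mul, succ_nsmul]

def D (v : ℤ × ℤ × ℤ) : Module.End ℤ (V L) := 1 - E v

lemma cEE (v w : ℤ × ℤ × ℤ) : Commute (E v : Module.End ℤ (V L)) (E w) := by
  unfold Commute SemiconjBy
  rw [E_mul, E_mul, add_comm]

lemma cDE (v w : ℤ × ℤ × ℤ) : Commute (D v : Module.End ℤ (V L)) (E w) :=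
  (Commute.one_left (E w)).sub_left (cEE v w)

lemma cDD (v w : ℤ × ℤ × ℤ) : Commute (D v : Module.End ℤ (V L)) (D w) :=
  ((Commute.one_right _).sub_right (cDE v w))

lemma D_pow_apply (v : ℤ × ℤ × ℤ) (K : ℕ) (F : V L) (p) :
    ((D v : Module.End ℤ (V L)) ^ K) F p
      = ∑ s ∈ Finset.range (K + 1), ((-1) ^ s * (K.choose s) : ℤ) • F (p + s • v) := by
  have hexp : (D v : Module.End ℤ (V L)) ^ K
      = ∑ s ∈ Finset.range (K + 1), ((-1) ^ s * (K.choose s) : ℤ) • (E v) ^ s := by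
    have h : (D v : Module.End ℤ (V L)) = (- E v) + 1 := by
      rw [D]; abel
    rw [h, Commute.add_pow (Commute.neg_left (Commute.one_right _))]
    refine Finset.sum_congr rfl fun s hs => ?_
    rw [neg_pow, one_pow, mul_one]
    rw [zsmul_eq_mul]
    push_cast
    rw [mul_assoc, mul_assoc, (Nat.cast_commute (K.choose s) ((E v : Module.End ℤ (V L)) ^ s)).eq]
  rw [hexp]
  rw [LinearMap.sum_apply]
  rw [Finset.sum_apply]
  refine Finset.sum_congr rfl fun s hs => ?_
  rw [LinearMap.smul_apply, Pi.smul_apply, E_pow, E_apply]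

lemma sum_lie' {ι : Type*} (s : Finset ι) (f : ι → L) (y : L) :
    ⁅∑ i ∈ s, f i, y⁆ = ∑ i ∈ s, ⁅f i, y⁆ :=
  map_sum (AddMonoidHom.mk' (fun x => ⁅x, y⁆) (fun u v => add_lie u v y)) f s

lemma lie_sum' {ι : Type*} (s : Finset ι) (f : ι → L) (y : L) :
    ⁅y, ∑ i ∈ s, f i⁆ = ∑ i ∈ s, ⁅y, f i⁆ :=
  map_sum (AddMonoidHom.mk' (fun x => ⁅y, x⁆) (fun u v => lie_add y u v)) f s

def e1 : ℤ × ℤ × ℤ := (-1, 1, 0)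
def e2 : ℤ × ℤ × ℤ := (0, -1, 1)
def e3 : ℤ × ℤ × ℤ := (-1, 0, 1)

lemma e1_add_e2 : e1 + e2 = e3 := by decide

set_option linter.unnecessarySeqFocus false

lemma smul_e1 (s : ℕ) (p : ℤ × ℤ × ℤ) : p + s • e1 = (p.1 - s, p.2.1 + s, p.2.2) := by
  refine Prod.ext ?_ (Prod.ext ?_ ?_) <;>
    simp [e1, Prod.smul_def, nsmul_eq_mul] <;> ring

lemma smul_e2 (s : ℕ) (p : ℤ × ℤ × ℤ) : p + s • e2 = (p.1, p.2.1 - s, p.2.2 + s) := by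
  refine Prod.ext ?_ (Prod.ext ?_ ?_) <;>
    simp [e2, Prod.smul_def, nsmul_eq_mul] <;> ring

lemma smul_e3 (s : ℕ) (p : ℤ × ℤ × ℤ) : p + s • e3 = (p.1 - s, p.2.1, p.2.2 + s) := by
  refine Prod.ext ?_ (Prod.ext ?_ ?_) <;>
    simp [e3, Prod.smul_def, nsmul_eq_mul] <;> ring

def F1 (a b c : ℤ → L) : V L := fun p => ⁅⁅a p.1, b p.2.1⁆, c p.2.2⁆
def F2 (a b c : ℤ → L) : V L := fun p => ⁅a p.1, ⁅b p.2.1, c p.2.2⁆⁆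
def F3 (a b c : ℤ → L) : V L := fun p => ⁅b p.2.1, ⁅a p.1, c p.2.2⁆⁆

lemma F1_eq (a b c : ℤ → L) : F1 a b c = F2 a b c - F3 a b c := by
  funext p
  simp [F1, F2, F3, lie_lie]

lemma F2_eq (a b c : ℤ → L) : F2 a b c = F1 a b c + F3 a b c := by
  rw [F1_eq]; abel

variable (a b c : ℤ → L)

lemma kill1 {N : ℕ} (h : ∀ n m : ℤ, locSum a b N n m = 0) :
    ((D e1 : Module.End ℤ (V L)) ^ N) (F1 a b c) = 0 := by
  funext p
  rw [D_pow_apply]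
  have : ∀ s ∈ Finset.range (N + 1),
      ((-1) ^ s * (N.choose s) : ℤ) • F1 a b c (p + s • e1)
        = ((-1) ^ s * (N.choose s) : ℤ) • ⁅⁅a (p.1 - s), b (p.2.1 + s)⁆, c p.2.2⁆ := by
    intro s _
    rw [smul_e1]
    rfl
  rw [Finset.sum_congr rfl this]
  have : (0 : L) = ⁅locSum a b N p.1 p.2.1, c p.2.2⁆ := by rw [h, zero_lie]
  rw [Pi.zero_apply, this, locSum, sum_lie']
  refine Finset.sum_congr rfl fun s _ => ?_
  rw [smul_lie]

lemma kill2 {N : ℕ} (h : ∀ n m : ℤ, locSum b c N n m = 0) :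
    ((D e2 : Module.End ℤ (V L)) ^ N) (F2 a b c) = 0 := by
  funext p
  rw [D_pow_apply]
  have : ∀ s ∈ Finset.range (N + 1),
      ((-1) ^ s * (N.choose s) : ℤ) • F2 a b c (p + s • e2)
        = ((-1) ^ s * (N.choose s) : ℤ) • ⁅a p.1, ⁅b (p.2.1 - s), c (p.2.2 + s)⁆⁆ := by
    intro s _
    rw [smul_e2]
    rfl
  rw [Finset.sum_congr rfl this]
  have : (0 : L) = ⁅a p.1, locSum b c N p.2.1 p.2.2⁆ := by rw [h, lie_zero]
  rw [Pi.zero_apply, this, locSum, lie_sum']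
  refine Finset.sum_congr rfl fun s _ => ?_
  rw [lie_smul]

lemma kill3 {N : ℕ} (h : ∀ n m : ℤ, locSum a c N n m = 0) :
    ((D e3 : Module.End ℤ (V L)) ^ N) (F3 a b c) = 0 := by
  funext p
  rw [D_pow_apply]
  have : ∀ s ∈ Finset.range (N + 1),
      ((-1) ^ s * (N.choose s) : ℤ) • F3 a b c (p + s • e3)
        = ((-1) ^ s * (N.choose s) : ℤ) • ⁅b p.2.1, ⁅a (p.1 - s), c (p.2.2 + s)⁆⁆ := by
    intro s _
    rw [smul_e3]
    rfl
  rw [Finset.sum_congr rfl this]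
  have : (0 : L) = ⁅b p.2.1, locSum a c N p.1 p.2.2⁆ := by rw [h, lie_zero]
  rw [Pi.zero_apply, this, locSum, lie_sum']
  refine Finset.sum_congr rfl fun s _ => ?_
  rw [lie_smul]

end DongAux

namespace Part2

open DongAux
variable (a b c : ℤ → L)

lemma conv1 (n M : ℕ) (p q : ℤ) :
    locSum (nProd a b n) c M p q
      = ((D e2 : Module.End ℤ (V L)) ^ M)
          (((D e1 : Module.End ℤ (V L)) ^ n) (F1 a b c)) (((n : ℤ), p, q)) := by
  rw [D_pow_apply, locSum]
  refine Finset.sum_congr rfl fun s _ => ?_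
  rw [smul_e2, D_pow_apply]
  congr 1
  show ⁅nProd a b n (p - s), c (q + s)⁆ = _
  rw [nProd, locSum, sum_lie']
  refine Finset.sum_congr rfl fun t _ => ?_
  rw [smul_lie, smul_e1]
  rfl

lemma conv2 (n M : ℕ) (p q : ℤ) :
    locSum a (nProd b c n) M p q
      = ((D e3 : Module.End ℤ (V L)) ^ M)
          (((D e2 : Module.End ℤ (V L)) ^ n) (F2 a b c)) ((p, (n : ℤ), q)) := by
  rw [D_pow_apply, locSum]
  refine Finset.sum_congr rfl fun s _ => ?_
  rw [smul_e3, D_pow_apply]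
  congr 1
  show ⁅a (p - s), nProd b c n (q + s)⁆ = _
  rw [nProd, locSum, lie_sum']
  refine Finset.sum_congr rfl fun t _ => ?_
  rw [lie_smul, smul_e2]
  rfl

end Part2

namespace Part3

open DongAux

lemma swap_apply {f g : Module.End ℤ (V L)} (h : Commute f g) (F : V L) :
    f (g F) = g (f F) := by
  rw [← Module.End.mul_apply, h.eq, Module.End.mul_apply]

lemma swap_pow {f g : Module.End ℤ (V L)} (h : Commute f g) (i j : ℕ) (F : V L) :
    (f ^ i) ((g ^ j) F) = (g ^ j) ((f ^ i) F) :=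
  swap_apply (h.pow_pow i j) F

lemma absorb {f : Module.End ℤ (V L)} {F : V L} {N K : ℕ} (h : (f ^ N) F = 0)
    (hNK : N ≤ K) : (f ^ K) F = 0 := by
  rw [← Nat.sub_add_cancel hNK, pow_add, Module.End.mul_apply, h, map_zero]

lemma E_inj {v : ℤ × ℤ × ℤ} {G : V L} (h : (E v : Module.End ℤ (V L)) G = 0) : G = 0 := by
  funext q
  have := congrFun h (q - v)
  simpa using this

lemma key0 : (D e3 : Module.End ℤ (V L)) - D e1 = D e2 * E e1 := by
  have h : e2 + e1 = e3 := by decide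
  rw [D, D, D, sub_mul, one_mul, E_mul, h]
  abel

lemma key0' : (D e3 : Module.End ℤ (V L)) = D e1 + E e1 * D e2 := by
  rw [D, D, D, mul_sub, mul_one, E_mul, e1_add_e2]
  abel

variable (a b c : ℤ → L)

lemma main1 {Nab Nbc Nac n N : ℕ}
    (h1 : ((D e1 : Module.End ℤ (V L)) ^ Nab) (F1 a b c) = 0)
    (h2 : ((D e2 : Module.End ℤ (V L)) ^ Nbc) (F2 a b c) = 0)
    (h3 : ((D e3 : Module.End ℤ (V L)) ^ Nac) (F3 a b c) = 0)
    (hab : Nab ≤ N) (hbc : Nbc ≤ N) (hac : Nac ≤ N) :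
    ((D e2 : Module.End ℤ (V L)) ^ (3 * N)) (((D e1 : Module.End ℤ (V L)) ^ n) (F1 a b c)) = 0 := by
  set F := F1 a b c with hF
  -- reduce to vanishing after applying the invertible shift (E e1)^(2N)
  apply E_inj (v := (2 * N) • e1)
  rw [← E_pow]
  -- move the shift inside and convert to (D e3 - D e1) form
  rw [swap_pow ((cDE e2 e1).symm) (2*N) (3*N), swap_pow ((cDE e1 e1).symm) (2*N) n]
  have h3N : ((D e2 : Module.End ℤ (V L)) ^ (3*N))
        (((D e1 : Module.End ℤ (V L)) ^ n) (((E e1 : Module.End ℤ (V L)) ^ (2*N)) F))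
      = ((D e2 : Module.End ℤ (V L)) ^ N) (((D e1 : Module.End ℤ (V L)) ^ n)
        ((((D e3 - D e1 : Module.End ℤ (V L)) ^ (2*N)) : Module.End ℤ (V L)) F)) := by
    conv_rhs => rw [key0, (cDE e2 e1).mul_pow, Module.End.mul_apply,
      swap_pow (cDD e1 e2) n (2*N), ← Module.End.mul_apply, ← pow_add,
      show N + 2*N = 3*N by ring]
  rw [h3N]
  -- binomial expansion of (D e3 - D e1)^(2N)
  rw [sub_eq_add_neg, Commute.add_pow ((cDD (L := L) e3 e1).neg_right), LinearMap.sum_apply,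
    map_sum, map_sum]
  apply Finset.sum_eq_zero
  intro m hm
  rw [Module.End.mul_apply, Module.End.mul_apply, Module.End.natCast_apply]
  have hneg : ∀ (j : ℕ) (G : V L), ((-(D e1) : Module.End ℤ (V L)) ^ j) G
      = ((-1 : ℤ) ^ j) • ((D e1 : Module.End ℤ (V L)) ^ j) G := by
    intro j G
    rw [show (-(D e1) : Module.End ℤ (V L)) = (-1 : ℤ) • D e1 from (neg_one_zsmul _).symm,
      smul_pow, LinearMap.smul_apply]
  rw [hneg, map_nsmul]
  rcases le_or_gt m N with hmN | hmN
  · -- 2N - m ≥ N ≥ Nab kills F1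
    have hz : ((D e1 : Module.End ℤ (V L)) ^ (2*N - m)) F = 0 :=
      absorb h1 (by omega)
    rw [hz]
    simp
  · -- m > N : use Jacobi F1 = F2 - F3
    have hz2 : ((D e2 : Module.End ℤ (V L)) ^ N) (((D e1 : Module.End ℤ (V L)) ^ n)
        (((D e3 : Module.End ℤ (V L)) ^ m)
        (((-1:ℤ)^(2*N-m)) • ((2*N).choose m •
          (((D e1 : Module.End ℤ (V L)) ^ (2*N - m)) (F2 a b c)))))) = 0 := by
      simp only [map_smul, map_nsmul]
      rw [swap_pow (cDD e2 e1) N n, swap_pow (cDD e2 e3) N m,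
        swap_pow (cDD e2 e1) N (2*N-m), absorb h2 hbc]
      simp
    have hz3 : ((D e2 : Module.End ℤ (V L)) ^ N) (((D e1 : Module.End ℤ (V L)) ^ n)
        (((D e3 : Module.End ℤ (V L)) ^ m)
        (((-1:ℤ)^(2*N-m)) • ((2*N).choose m •
          (((D e1 : Module.End ℤ (V L)) ^ (2*N - m)) (F3 a b c)))))) = 0 := by
      simp only [map_smul, map_nsmul]
      rw [swap_pow (cDD e3 e1) m (2*N-m), absorb h3 (by omega)]
      simp
    rw [hF, F1_eq]
    simp only [map_sub, smul_sub]
    rw [hz2, hz3, sub_zero]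

end Part3

namespace Part4

open DongAux Part3
variable (a b c : ℤ → L)

lemma main2 {Nab Nbc Nac n N : ℕ}
    (h1 : ((D e1 : Module.End ℤ (V L)) ^ Nab) (F1 a b c) = 0)
    (h2 : ((D e2 : Module.End ℤ (V L)) ^ Nbc) (F2 a b c) = 0)
    (h3 : ((D e3 : Module.End ℤ (V L)) ^ Nac) (F3 a b c) = 0)
    (hab : Nab ≤ N) (hbc : Nbc ≤ N) (hac : Nac ≤ N) :
    ((D e3 : Module.End ℤ (V L)) ^ (3 * N)) (((D e2 : Module.End ℤ (V L)) ^ n) (F2 a b c)) = 0 := by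
  rw [swap_pow (cDD e3 e2) (3*N) n]
  rw [show 3*N = N + 2*N by ring, pow_add, Module.End.mul_apply]
  have hexp : (D e3 : Module.End ℤ (V L)) ^ (2*N)
      = ∑ m ∈ Finset.range (2*N + 1),
          (D e1 : Module.End ℤ (V L)) ^ m * (E e1 * D e2) ^ (2*N - m)
            * (((2*N).choose m : ℕ) : Module.End ℤ (V L)) := by
    rw [key0', Commute.add_pow ((cDE (L := L) e1 e1).mul_right (cDD e1 e2))]
  rw [hexp, LinearMap.sum_apply, map_sum, map_sum]
  apply Finset.sum_eq_zero
  intro m hm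
  rw [Module.End.mul_apply, Module.End.mul_apply, Module.End.natCast_apply,
    ((cDE (L := L) e2 e1).symm).mul_pow, Module.End.mul_apply]
  rcases le_or_gt m N with hmN | hmN
  · -- 2N - m ≥ N ≥ Nbc kills F2
    simp only [map_nsmul]
    rw [absorb h2 (by omega)]
    simp
  · -- m > N : use Jacobi F2 = F1 + F3
    rw [F2_eq]
    simp only [smul_add, map_add, map_nsmul]
    have hzF1 : ((D e2 : Module.End ℤ (V L)) ^ n) (((D e3 : Module.End ℤ (V L)) ^ N)
        (((D e1 : Module.End ℤ (V L)) ^ m) (((E e1 : Module.End ℤ (V L)) ^ (2*N - m))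
          (((D e2 : Module.End ℤ (V L)) ^ (2*N - m)) (F1 a b c))))) = 0 := by
      rw [swap_pow (cDE e1 e1) m (2*N - m), swap_pow (cDD e1 e2) m (2*N - m),
        absorb h1 (by omega)]
      simp
    have hzF3 : ((D e2 : Module.End ℤ (V L)) ^ n) (((D e3 : Module.End ℤ (V L)) ^ N)
        (((D e1 : Module.End ℤ (V L)) ^ m) (((E e1 : Module.End ℤ (V L)) ^ (2*N - m))
          (((D e2 : Module.End ℤ (V L)) ^ (2*N - m)) (F3 a b c))))) = 0 := by
      rw [swap_pow (cDD e3 e1) N m, swap_pow (cDE e3 e1) N (2*N - m),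
        swap_pow (cDD e3 e2) N (2*N - m), absorb h3 hac]
      simp
    rw [hzF1, hzF3, smul_zero, add_zero]

end Part4


open DongAux Part2 Part3 Part4 in
/-- **Dong Lemma.** Let `L` be a Lie algebra over a field of characteristic zero and
`a(z), b(z), c(z)` pairwise mutually local formal distributions over `L`. Then for every
`n ∈ ℤ₊` the pairs `((a₍ₙ₎b)(z), c(z))` and `(a(z), (b₍ₙ₎c)(z))` are local. -/
theorem stmt_10 (a b c : ℤ → L)
    (hab : IsLocalPair a b) (hba : IsLocalPair b a)
    (hac : IsLocalPair a c) (hca : IsLocalPair c a)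
    (hbc : IsLocalPair b c) (hcb : IsLocalPair c b) :
    ∀ n : ℕ, IsLocalPair (nProd a b n) c ∧ IsLocalPair a (nProd b c n) := by
  obtain ⟨Nab, h1⟩ := hab
  obtain ⟨Nbc, h2⟩ := hbc
  obtain ⟨Nac, h3⟩ := hac
  intro n
  set N := max Nab (max Nbc Nac) with hN
  have k1 := kill1 a b c h1
  have k2 := kill2 a b c h2
  have k3 := kill3 a b c h3
  have bab : Nab ≤ N := le_max_left _ _
  have bbc : Nbc ≤ N := le_trans (le_max_left _ _) (le_max_right _ _)
  have bac : Nac ≤ N := le_trans (le_max_right _ _) (le_max_right _ _)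
  constructor
  · refine ⟨3 * N, fun p q => ?_⟩
    rw [conv1, main1 a b c k1 k2 k3 bab bbc bac]
    rfl
  · refine ⟨3 * N, fun p q => ?_⟩
    rw [conv2, main2 a b c k1 k2 k3 bab bbc bac]
    rfl
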